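/- The numerical range of the 2×2 complex matrix [[a, 0], [b, d]] with a ≠ d and b ≠ 0 is the closed elliptical disc with foci a and d, minor axis length |b|, and major axis length sqrt(|a - d|² + |b|²). -/

import Mathlib

open Complex

private lemma aux_D_nonneg (t r γ β : ℝ) (hγ : 0 ≤ γ) (hβ : 0 ≤ β) (ht0 : 0 ≤ t)
    (ht1 : t ≤ 1) (hr : r^2 ≤ γ*β*(t*(1-t))) :
    (γ*t^2 + β*(t*(1-t)) + 2*t*r) + (γ*(t-1)^2 + β*(t*(1-t)) + 2*(t-1)*r) ≤ γ + β := by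
  have hτ : (0:ℝ) ≤ t*(1-t) := mul_nonneg ht0 (by linarith)
  have h1 : 4*(2*t-1)^2*r^2 ≤ 4*(2*t-1)^2*(γ*β*(t*(1-t))) := by
    have := sq_nonneg (2*t-1); nlinarith
  have h2 : 0 ≤ (2*γ*(t*(1-t)) - β*(1-2*(t*(1-t))))^2 := sq_nonneg _
  have h3 : 0 ≤ γ*β*(t*(1-t))^2 := by positivity
  have hY : 0 ≤ β*(1-2*(t*(1-t))) := by nlinarith
  have hX : 0 ≤ 2*γ*(t*(1-t)) := by positivity
  nlinarith [sq_nonneg (2*γ*(t*(1-t)) + β*(1-2*(t*(1-t))) - 2*(2*t-1)*r)]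

private lemma aux_inner (a b d : ℂ) (x : EuclideanSpace ℂ (Fin 2)) :
    (inner ℂ x (Matrix.toEuclideanLin !![a, 0; b, d] x) : ℂ) =
      a * ((starRingEnd ℂ) (x 0) * x 0) + d * ((starRingEnd ℂ) (x 1) * x 1)
        + b * (x 0 * (starRingEnd ℂ) (x 1)) := by
  simp [Matrix.toEuclideanLin_apply, PiLp.inner_apply, Fin.sum_univ_two,
    Matrix.mulVec, dotProduct]
  ring

private lemma aux_norm (x : EuclideanSpace ℂ (Fin 2)) (h : ‖x‖ = 1) :
    Complex.normSq (x 0) + Complex.normSq (x 1) = 1 := by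
  have h2 := EuclideanSpace.norm_eq x
  rw [h, Fin.sum_univ_two] at h2
  have h3 : ‖x 0‖^2 + ‖x 1‖^2 = 1 := by
    have := Real.sqrt_eq_one.mp h2.symm
    linarith
  simpa [Complex.sq_norm] using h3

set_option maxHeartbeats 1000000 in
theorem stmt_19 (a b d : ℂ) (had : a ≠ d) (hb : b ≠ 0) :
    {z : ℂ | ∃ x : EuclideanSpace ℂ (Fin 2), ‖x‖ = 1 ∧
        (inner ℂ x (Matrix.toEuclideanLin !![a, 0; b, d] x) : ℂ) = z} =
      {z : ℂ | ‖z - a‖ + ‖z - d‖ ≤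
        Real.sqrt (‖a - d‖ ^ 2 + ‖b‖ ^ 2)} := by
  have hc : a - d ≠ 0 := sub_ne_zero.mpr had
  have hγ0 : 0 < Complex.normSq (a - d) := Complex.normSq_pos.mpr hc
  have hβ0 : 0 < Complex.normSq b := Complex.normSq_pos.mpr hb
  set γ := Complex.normSq (a - d) with hγdef
  set β := Complex.normSq b with hβdef
  clear_value γ β
  have hrhs : ‖a-d‖^2 + ‖b‖^2 = γ + β := by
    rw [Complex.sq_norm, Complex.sq_norm, hγdef, hβdef]
  ext z
  simp only [Set.mem_setOf_eq, hrhs]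
  constructor
  · rintro ⟨x, hx, hz⟩
    set t := Complex.normSq (x 0) with htdef
    set w := x 0 * (starRingEnd ℂ) (x 1) with hwdef
    clear_value t w
    have hsum := aux_norm x hx
    rw [← htdef] at hsum
    have ht0 : 0 ≤ t := by rw [htdef]; exact Complex.normSq_nonneg _
    have ht1 : t ≤ 1 := by have := Complex.normSq_nonneg (x 1); linarith
    have hs : Complex.normSq (x 1) = 1 - t := by linarith
    have hwsq : Complex.normSq w = t * (1 - t) := by
      rw [hwdef, Complex.normSq_mul, Complex.normSq_conj, hs, ← htdef]
    have hzval : z = a * ((t:ℝ):ℂ) + d * (((1-t:ℝ)):ℂ) + b * w := by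
      rw [← hz, aux_inner]
      rw [← Complex.normSq_eq_conj_mul_self, ← Complex.normSq_eq_conj_mul_self, ← htdef, hs, ← hwdef]
    have hu : z - d = (a-d) * ((t:ℝ):ℂ) + b * w := by
      rw [hzval]; push_cast; ring
    have hv : z - a = (a-d) * (((t-1:ℝ)):ℂ) + b * w := by
      rw [hzval]; push_cast; ring
    set r := ((a-d) * (starRingEnd ℂ) b * (starRingEnd ℂ) w).re with hrdef
    clear_value r
    have hr : r^2 ≤ γ*β*(t*(1-t)) := by
      have h1 := Complex.normSq_apply ((a-d) * (starRingEnd ℂ) b * (starRingEnd ℂ) w)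
      have h2 : Complex.normSq ((a-d) * (starRingEnd ℂ) b * (starRingEnd ℂ) w)
          = γ*β*(t*(1-t)) := by
        rw [Complex.normSq_mul, Complex.normSq_mul, Complex.normSq_conj,
          Complex.normSq_conj, hwsq, ← hγdef, ← hβdef]
      rw [hrdef]
      nlinarith [sq_nonneg (((a-d) * (starRingEnd ℂ) b * (starRingEnd ℂ) w).im)]
    have hre1 : ((a-d) * ((t:ℝ):ℂ) * (starRingEnd ℂ) (b*w)).re = t * r := by
      have he : (a-d) * ((t:ℝ):ℂ) * (starRingEnd ℂ) (b*w)
          = ((t:ℝ):ℂ) * ((a-d) * (starRingEnd ℂ) b * (starRingEnd ℂ) w) := by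
        rw [map_mul]; ring
      rw [he, Complex.re_ofReal_mul, ← hrdef]
    have hre2 : ((a-d) * (((t-1:ℝ)):ℂ) * (starRingEnd ℂ) (b*w)).re = (t-1) * r := by
      have he : (a-d) * (((t-1:ℝ)):ℂ) * (starRingEnd ℂ) (b*w)
          = (((t-1:ℝ)):ℂ) * ((a-d) * (starRingEnd ℂ) b * (starRingEnd ℂ) w) := by
        rw [map_mul]; ring
      rw [he, Complex.re_ofReal_mul, ← hrdef]
    have hnu : Complex.normSq (z - d) = γ*t^2 + β*(t*(1-t)) + 2*t*r := by
      rw [hu, Complex.normSq_add, Complex.normSq_mul, Complex.normSq_mul,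
        Complex.normSq_ofReal, hwsq, hre1, ← hγdef, ← hβdef]
      ring
    have hnv : Complex.normSq (z - a) = γ*(t-1)^2 + β*(t*(1-t)) + 2*(t-1)*r := by
      rw [hv, Complex.normSq_add, Complex.normSq_mul, Complex.normSq_mul,
        Complex.normSq_ofReal, hwsq, hre2, ← hγdef, ← hβdef]
      ring
    have hD : Complex.normSq (z-d) + Complex.normSq (z-a) ≤ γ + β := by
      rw [hnu, hnv]; exact aux_D_nonneg t r γ β hγ0.le hβ0.le ht0 ht1 hr
    have hident : (γ + β - Complex.normSq (z-d) - Complex.normSq (z-a))^2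
        - 4*(Complex.normSq (z-a) * Complex.normSq (z-d)) = (β*(2*t-1) - 2*r)^2 := by
      rw [hnu, hnv]; ring
    have hp : 0 ≤ ‖z-a‖ * ‖z-d‖ := by positivity
    have hpsq : (‖z-a‖ * ‖z-d‖)^2
        = Complex.normSq (z-a) * Complex.normSq (z-d) := by
      rw [mul_pow, Complex.sq_norm, Complex.sq_norm]
    have h2p : 2*(‖z-a‖ * ‖z-d‖)
        ≤ γ + β - Complex.normSq (z-d) - Complex.normSq (z-a) := by
      nlinarith [hident, hpsq, hD, hp, sq_nonneg (β*(2*t-1) - 2*r)]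
    rw [Real.le_sqrt (by positivity) (by positivity)]
    nlinarith [h2p, Complex.sq_norm (z-a), Complex.sq_norm (z-d)]
  · intro hle
    set A1 := ‖z-a‖ with hA1
    set B1 := ‖z-d‖ with hB1
    clear_value A1 B1
    have hA0 : 0 ≤ A1 := by rw [hA1]; exact norm_nonneg _
    have hB0 : 0 ≤ B1 := by rw [hB1]; exact norm_nonneg _
    have hσ2 : (A1 + B1)^2 ≤ γ + β :=
      (Real.le_sqrt (by positivity) (by positivity)).mp hle
    set nu := Complex.normSq (z-d) with hnudef
    set nv := Complex.normSq (z-a) with hnvdef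
    clear_value nu nv
    have hnu' : nu = B1^2 := by rw [hnudef, hB1, Complex.sq_norm]
    have hnv' : nv = A1^2 := by rw [hnvdef, hA1, Complex.sq_norm]
    have hN0 : (0:ℝ) < γ + β := by linarith
    have hm0 : 0 ≤ nu - nv + (γ+β) := by nlinarith [mul_nonneg hA0 hB0]
    have hmN : nu - nv + (γ+β) ≤ 2*(γ+β) := by nlinarith [mul_nonneg hA0 hB0]
    have hΔid : (nu - nv + (γ+β))^2 - 4*(γ+β)*nu
        = ((A1+B1)^2 - (γ+β))*((B1-A1)^2 - (γ+β)) := by rw [hnu', hnv']; ring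
    have hΔ : 0 ≤ (nu - nv + (γ+β))^2 - 4*(γ+β)*nu := by
      rw [hΔid]
      have h1 : (A1+B1)^2 - (γ+β) ≤ 0 := by linarith
      have h2 : (B1-A1)^2 - (γ+β) ≤ 0 := by nlinarith [mul_nonneg hA0 hB0]
      nlinarith [mul_nonneg (neg_nonneg.2 h1) (neg_nonneg.2 h2)]
    set S := Real.sqrt ((nu - nv + (γ+β))^2 - 4*(γ+β)*nu) with hSdef
    clear_value S
    have hS2 : S^2 = (nu - nv + (γ+β))^2 - 4*(γ+β)*nu := by rw [hSdef]; exact Real.sq_sqrt hΔ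
    have hS0 : 0 ≤ S := by rw [hSdef]; exact Real.sqrt_nonneg _
    have hSm : S ≤ nu - nv + (γ+β) := by
      have h1 : S ≤ Real.sqrt ((nu - nv + (γ+β))^2) := by
        rw [hSdef]
        apply Real.sqrt_le_sqrt
        nlinarith [hnu' ▸ sq_nonneg B1]
      rwa [Real.sqrt_sq hm0] at h1
    set t := ((nu - nv + (γ+β)) - S)/(2*(γ+β)) with htdef
    clear_value t
    have ht0 : 0 ≤ t := by rw [htdef]; exact div_nonneg (by linarith) (by linarith)
    have ht1 : t ≤ 1 := by
      rw [htdef, div_le_one (by linarith)]; linarith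
    have h2Nt : 2*(γ+β)*t = (nu - nv + (γ+β)) - S := by
      rw [htdef]; field_simp
    have hroot : (γ+β)*t^2 - (nu - nv + (γ+β))*t + nu = 0 := by
      have h4 : 4*(γ+β)*((γ+β)*t^2 - (nu - nv + (γ+β))*t + nu) = 0 := by
        linear_combination (2*(γ+β)*t - (nu - nv + (γ+β)) - S) * h2Nt + hS2
      rcases mul_eq_zero.mp h4 with h | h
      · exfalso; linarith
      · exact h
    set w := (z - d - (a-d)*((t:ℝ):ℂ))/b with hwdef
    clear_value w
    have hbw : b * w = z - d - (a-d)*((t:ℝ):ℂ) := by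
      rw [hwdef]; field_simp
    have hre : 2*((z-d) * (starRingEnd ℂ) (a-d)).re = nu + γ - nv := by
      have h := Complex.normSq_sub (z-d) (a-d)
      rw [show z-d-(a-d) = z-a by ring] at h
      rw [hnudef, hnvdef, hγdef]; linarith
    have hwn : Complex.normSq w = t * (1-t) := by
      have h1 : β * Complex.normSq w = Complex.normSq (z - d - (a-d)*((t:ℝ):ℂ)) := by
        rw [← hbw, Complex.normSq_mul, hβdef]
      have h2 : Complex.normSq (z - d - (a-d)*((t:ℝ):ℂ))
          = nu - t*(2*((z-d) * (starRingEnd ℂ) (a-d)).re) + γ*t^2 := by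
        rw [Complex.normSq_sub, Complex.normSq_mul, Complex.normSq_ofReal]
        have he : (z-d) * (starRingEnd ℂ) ((a-d)*((t:ℝ):ℂ))
            = ((t:ℝ):ℂ) * ((z-d) * (starRingEnd ℂ) (a-d)) := by
          rw [map_mul, Complex.conj_ofReal]; ring
        rw [he, Complex.re_ofReal_mul, ← hγdef, ← hnudef]
        ring
      have h3 : β * Complex.normSq w = β * (t * (1-t)) := by
        rw [h1, h2, hre]; linear_combination hroot
      exact mul_left_cancel₀ (ne_of_gt hβ0) h3
    have hwtnn : (0:ℝ) ≤ t * (1-t) := mul_nonneg ht0 (by linarith)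
    have habsw : ‖w‖ = Real.sqrt (t*(1-t)) := by
      rw [Complex.norm_def, hwn]
    set ph : ℂ := if w = 0 then 1 else w / ((‖w‖ : ℝ):ℂ) with hphdef
    clear_value ph
    have hphw : ((‖w‖ : ℝ):ℂ) * ph = w := by
      by_cases hw : w = 0
      · simp [hphdef, hw]
      · rw [hphdef, if_neg hw]
        have hne : ((‖w‖ : ℝ):ℂ) ≠ 0 := by
          simpa [Complex.ofReal_ne_zero] using (norm_ne_zero_iff.mpr hw)
        field_simp
    have hnph : Complex.normSq ph = 1 := by
      by_cases hw : w = 0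
      · simp [hphdef, hw]
      · rw [hphdef, if_neg hw, Complex.normSq_div, Complex.normSq_ofReal]
        have h0 : Complex.normSq w ≠ 0 := (Complex.normSq_pos.mpr hw).ne'
        rw [show ‖w‖ * ‖w‖ = Complex.normSq w by
          rw [← Complex.sq_norm]; ring]
        field_simp
    set x0 : ℂ := ((Real.sqrt t : ℝ):ℂ) * ph with hx0def
    set x1 : ℂ := ((Real.sqrt (1-t) : ℝ):ℂ) with hx1def
    clear_value x0 x1
    refine ⟨(WithLp.equiv 2 (Fin 2 → ℂ)).symm ![x0, x1], ?_, ?_⟩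
    · rw [EuclideanSpace.norm_eq]
      have e0 : (WithLp.equiv 2 (Fin 2 → ℂ)).symm ![x0, x1] 0 = x0 := rfl
      have e1 : (WithLp.equiv 2 (Fin 2 → ℂ)).symm ![x0, x1] 1 = x1 := rfl
      rw [Fin.sum_univ_two, e0, e1]
      have hn0 : ‖x0‖^2 = t := by
        rw [hx0def, Complex.sq_norm, Complex.normSq_mul,
          Complex.normSq_ofReal, hnph, Real.mul_self_sqrt ht0, mul_one]
      have hn1 : ‖x1‖^2 = 1 - t := by
        rw [hx1def, Complex.sq_norm, Complex.normSq_ofReal,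
          Real.mul_self_sqrt (by linarith)]
      rw [hn0, hn1]
      simp
    · rw [aux_inner]
      have e0 : (WithLp.equiv 2 (Fin 2 → ℂ)).symm ![x0, x1] 0 = x0 := rfl
      have e1 : (WithLp.equiv 2 (Fin 2 → ℂ)).symm ![x0, x1] 1 = x1 := rfl
      rw [e0, e1, ← Complex.normSq_eq_conj_mul_self, ← Complex.normSq_eq_conj_mul_self]
      have hnx0 : Complex.normSq x0 = t := by
        rw [hx0def, Complex.normSq_mul, Complex.normSq_ofReal, hnph,
          Real.mul_self_sqrt ht0, mul_one]
      have hnx1 : Complex.normSq x1 = 1 - t := by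
        rw [hx1def, Complex.normSq_ofReal, Real.mul_self_sqrt (by linarith)]
      have hx01 : x0 * (starRingEnd ℂ) x1 = w := by
        rw [hx0def, hx1def, Complex.conj_ofReal]
        have he : ((Real.sqrt t : ℝ):ℂ) * ph * ((Real.sqrt (1-t) : ℝ):ℂ)
            = ((Real.sqrt t * Real.sqrt (1-t) : ℝ):ℂ) * ph := by push_cast; ring
        rw [he, ← Real.sqrt_mul ht0, ← habsw, hphw]
      rw [hnx0, hnx1, hx01]
      have hfin : a * ((t:ℝ):ℂ) + d * (((1-t:ℝ)):ℂ) + b * w = z := by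
        rw [hbw]; push_cast; ring
      rw [← hfin]
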